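/- Theorem 4.9 (explicit construction of the extension with prescribed real eigenvalue). Let λ ∈ ℝ. Define g_λ : [0,2π] → ℂ by g_λ(x) = −2i · exp( −i ∫ₓ^{2π} conj(V(t)) dt + iλ(2π − x) ), and set ρ_λ := (i/2) g_λ(0) and k_λ(x) := Im V(x) · g_λ(x). Then: (a) g_λ(2π) = −2i and g_λ(0) = ρ_λ g_λ(2π); (b) g_λ is absolutely continuous with some derivative g_λ′ ∈ L¹(0,2π) and i g_λ′(x) + V(x) g_λ(x) + g_λ(2π) k_λ(x) = λ g_λ(x) for almost every x ∈ (0,2π); (c) 1 − |ρ_λ|² = (1/2) ∫₀^{2π} Im V(t) · |g_λ(t)|² dt. -/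

import Mathlib

open MeasureTheory Real Complex

lemma swap_triangle (W φ : ℝ → ℂ) (hW : Integrable W) (hφ : Integrable φ) {x : ℝ} :
    ∫ t in Set.Ioc (0:ℝ) x, W t * (∫ s in Set.Ioc (0:ℝ) t, φ s)
      = ∫ s in Set.Ioc (0:ℝ) x, φ s * (∫ t in Set.Ioc s x, W t) := by
  have hmeas : MeasurableSet {p : ℝ × ℝ | p.2 ≤ p.1} := measurableSet_le measurable_snd measurable_fst
  set μ := volume.restrict (Set.Ioc (0:ℝ) x) with hμdef
  have hprod : Integrable (fun p : ℝ × ℝ => W p.1 * φ p.2) (μ.prod μ) :=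
    (hW.restrict).mul_prod (hφ.restrict)
  have hF : Integrable ({p : ℝ × ℝ | p.2 ≤ p.1}.indicator (fun p => W p.1 * φ p.2)) (μ.prod μ) :=
    hprod.indicator hmeas
  have hswap := MeasureTheory.integral_integral_swap (f := fun t s =>
    ({p : ℝ × ℝ | p.2 ≤ p.1}.indicator (fun p => W p.1 * φ p.2)) (t, s)) (μ := μ) (ν := μ) hF
  calc ∫ t in Set.Ioc (0:ℝ) x, W t * (∫ s in Set.Ioc (0:ℝ) t, φ s)
      = ∫ t, (∫ s, ({p : ℝ × ℝ | p.2 ≤ p.1}.indicator (fun p => W p.1 * φ p.2)) (t, s) ∂μ) ∂μ := by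
        refine setIntegral_congr_fun measurableSet_Ioc (fun t ht => ?_)
        have : (fun s => ({p : ℝ × ℝ | p.2 ≤ p.1}.indicator (fun p => W p.1 * φ p.2)) (t, s))
            = (Set.Iic t).indicator (fun s => W t * φ s) := by
          ext s
          by_cases h : s ≤ t <;> simp [Set.indicator_apply, h]
        rw [this, integral_indicator measurableSet_Iic, hμdef, Measure.restrict_restrict measurableSet_Iic]
        have hset : Set.Iic t ∩ Set.Ioc (0:ℝ) x = Set.Ioc (0:ℝ) t := by
          ext s; simp only [Set.mem_inter_iff, Set.mem_Iic, Set.mem_Ioc]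
          exact ⟨fun ⟨h1, h2, h3⟩ => ⟨h2, h1⟩, fun ⟨h1, h2⟩ => ⟨h2, h1, h2.trans ht.2⟩⟩
        rw [hset, integral_const_mul]
    _ = ∫ s, (∫ t, ({p : ℝ × ℝ | p.2 ≤ p.1}.indicator (fun p => W p.1 * φ p.2)) (t, s) ∂μ) ∂μ :=
        hswap
    _ = ∫ s in Set.Ioc (0:ℝ) x, φ s * (∫ t in Set.Ioc s x, W t) := by
        refine setIntegral_congr_fun measurableSet_Ioc (fun s hs => ?_)
        have : (fun t => ({p : ℝ × ℝ | p.2 ≤ p.1}.indicator (fun p => W p.1 * φ p.2)) (t, s))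
            = (Set.Ici s).indicator (fun t => W t * φ s) := by
          ext t
          by_cases h : s ≤ t <;> simp [Set.indicator_apply, h]
        rw [this, integral_indicator measurableSet_Ici, hμdef, Measure.restrict_restrict measurableSet_Ici]
        have hset : Set.Ici s ∩ Set.Ioc (0:ℝ) x = Set.Icc s x := by
          ext t; simp only [Set.mem_inter_iff, Set.mem_Ici, Set.mem_Ioc, Set.mem_Icc]
          exact ⟨fun ⟨h1, _, h3⟩ => ⟨h1, h3⟩, fun ⟨h1, h2⟩ => ⟨h1, hs.1.trans_le h1, h2⟩⟩
        rw [hset, ← MeasureTheory.integral_Icc_eq_integral_Ioc, integral_mul_const]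
        ring_nf

section Iter

noncomputable def Nf (w : ℝ → ℂ) : ℝ → ℂ := fun t => ∫ s in Set.Ioc (0:ℝ) t, w s

lemma Nf_cont (w : ℝ → ℂ) (hw : Integrable w) : Continuous (Nf w) := by
  have h1 : Nf w = fun t => ∫ s in (0:ℝ)..(max t 0), w s := by
    funext t
    rcases le_total t 0 with ht | ht
    · simp [Nf, max_eq_right ht, Set.Ioc_eq_empty (not_lt.2 ht)]
    · rw [Nf, max_eq_left ht, intervalIntegral.integral_of_le ht]
  rw [h1]
  exact (hw.continuous_primitive 0).comp (continuous_id.max continuous_const)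

lemma Nf_bdd (w : ℝ → ℂ) (hw : Integrable w) (t : ℝ) : ‖Nf w t‖ ≤ ∫ s, ‖w s‖ := by
  refine (norm_integral_le_integral_norm _).trans ?_
  exact setIntegral_le_integral hw.norm (Filter.Eventually.of_forall fun s => norm_nonneg _)

lemma intWN (w : ℝ → ℂ) (hw : Integrable w) (m : ℕ) :
    Integrable (fun t => w t * Nf w t ^ m) := by
  have h := hw.bdd_mul (c := (∫ s, ‖w s‖) ^ m)
    ((Nf_cont w hw).pow m).aestronglyMeasurable
    (Filter.Eventually.of_forall fun t => by
      rw [Pi.pow_apply, norm_pow]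
      exact pow_le_pow_left₀ (norm_nonneg _) (Nf_bdd w hw t) m)
  exact h.congr (Filter.Eventually.of_forall fun t => mul_comm _ _)

lemma iter (w : ℝ → ℂ) (hw : Integrable w) (n : ℕ) : ∀ x : ℝ, 0 ≤ x →
    ∫ t in Set.Ioc (0:ℝ) x, w t * Nf w t ^ n = Nf w x ^ (n+1) / ((n:ℂ)+1) := by
  induction n with
  | zero => intro x hx; simp [Nf]
  | succ n ih =>
    intro x hx
    have hsplit : ∀ s ∈ Set.Ioc (0:ℝ) x,
        ∫ t in Set.Ioc s x, w t * Nf w t ^ n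
          = Nf w x ^ (n+1) / ((n:ℂ)+1) - Nf w s ^ (n+1) / ((n:ℂ)+1) := by
      intro s hs
      have hunion : Set.Ioc (0:ℝ) s ∪ Set.Ioc s x = Set.Ioc (0:ℝ) x :=
        Set.Ioc_union_Ioc_eq_Ioc hs.1.le hs.2
      have hdis : Disjoint (Set.Ioc (0:ℝ) s) (Set.Ioc s x) := Set.Ioc_disjoint_Ioc_of_le le_rfl
      have hadd : (∫ t in Set.Ioc (0:ℝ) s, w t * Nf w t ^ n)
          + ∫ t in Set.Ioc s x, w t * Nf w t ^ n
          = ∫ t in Set.Ioc (0:ℝ) x, w t * Nf w t ^ n := by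
        rw [← setIntegral_union hdis measurableSet_Ioc
          ((intWN w hw n).integrableOn) ((intWN w hw n).integrableOn), hunion]
      rw [ih x hx, ih s hs.1.le] at hadd
      linear_combination hadd
    have hint1 : Integrable (fun s => w s * (Nf w x ^ (n+1) / ((n:ℂ)+1)))
        (volume.restrict (Set.Ioc (0:ℝ) x)) := hw.restrict.mul_const _
    have hint2 : Integrable (fun s => w s * (Nf w s ^ (n+1) / ((n:ℂ)+1)))
        (volume.restrict (Set.Ioc (0:ℝ) x)) := by
      have := ((intWN w hw (n+1)).restrict (s := Set.Ioc (0:ℝ) x)).div_const ((n:ℂ)+1)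
      exact this.congr (Filter.Eventually.of_forall fun t => by push_cast; ring)
    have h3 : ∫ s in Set.Ioc (0:ℝ) x, w s * (Nf w s ^ (n+1) / ((n:ℂ)+1))
        = (∫ t in Set.Ioc (0:ℝ) x, w t * Nf w t ^ (n+1)) / ((n:ℂ)+1) := by
      rw [← integral_div]
      exact setIntegral_congr_fun measurableSet_Ioc fun s _ => by push_cast; ring
    have keyA : (∫ t in Set.Ioc (0:ℝ) x, w t * Nf w t ^ (n+1))
        = Nf w x * (Nf w x ^ (n+1) / ((n:ℂ)+1))
          - (∫ t in Set.Ioc (0:ℝ) x, w t * Nf w t ^ (n+1)) / ((n:ℂ)+1) := by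
      calc (∫ t in Set.Ioc (0:ℝ) x, w t * Nf w t ^ (n+1))
          = ∫ t in Set.Ioc (0:ℝ) x, (w t * Nf w t ^ n) * (∫ s in Set.Ioc (0:ℝ) t, w s) := by
            refine setIntegral_congr_fun measurableSet_Ioc fun t _ => ?_
            rw [show (∫ s in Set.Ioc (0:ℝ) t, w s) = Nf w t from rfl]; ring
        _ = ∫ s in Set.Ioc (0:ℝ) x, w s * (∫ t in Set.Ioc s x, w t * Nf w t ^ n) :=
            swap_triangle _ w (intWN w hw n) hw
        _ = ∫ s in Set.Ioc (0:ℝ) x,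
              w s * (Nf w x ^ (n+1) / ((n:ℂ)+1) - Nf w s ^ (n+1) / ((n:ℂ)+1)) :=
            setIntegral_congr_fun measurableSet_Ioc fun s hs => by rw [hsplit s hs]
        _ = (∫ s in Set.Ioc (0:ℝ) x, w s * (Nf w x ^ (n+1) / ((n:ℂ)+1)))
              - ∫ s in Set.Ioc (0:ℝ) x, w s * (Nf w s ^ (n+1) / ((n:ℂ)+1)) := by
            rw [← integral_sub hint1 hint2]
            exact setIntegral_congr_fun measurableSet_Ioc fun s _ => by ring
        _ = Nf w x * (Nf w x ^ (n+1) / ((n:ℂ)+1))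
              - (∫ t in Set.Ioc (0:ℝ) x, w t * Nf w t ^ (n+1)) / ((n:ℂ)+1) := by
            rw [integral_mul_const, h3]
            rw [show (∫ a in Set.Ioc (0:ℝ) x, w a) = Nf w x from rfl]
    have hn1 : ((n:ℂ)+1) ≠ 0 := by
      have := Nat.cast_ne_zero (R := ℂ).mpr (show n+1 ≠ 0 by omega)
      push_cast at this; exact this
    have hn2 : ((n:ℂ)+2) ≠ 0 := by
      have := Nat.cast_ne_zero (R := ℂ).mpr (show n+2 ≠ 0 by omega)
      push_cast at this; exact this
    have goal2 : (((n+1:ℕ):ℂ)+1) ≠ 0 := by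
      push_cast; intro h; exact hn2 (by linear_combination h)
    rw [eq_div_iff goal2]
    field_simp at keyA
    push_cast
    linear_combination keyA
end Iter

lemma key_exp (w : ℝ → ℂ) (hw : Integrable w) (x : ℝ) (hx : 0 ≤ x) :
    ∫ t in Set.Ioc (0:ℝ) x, w t * Complex.exp (Nf w t) = Complex.exp (Nf w x) - 1 := by
  have hexp : ∀ z : ℂ, HasSum (fun n => z ^ n / (Nat.factorial n)) (Complex.exp z) := by
    intro z; rw [Complex.exp_eq_exp_ℂ]; exact NormedSpace.expSeries_div_hasSum_exp z
  set C := ∫ s, ‖w s‖ with hC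
  have hC0 : 0 ≤ C := integral_nonneg fun s => norm_nonneg _
  have hmain : HasSum (fun n : ℕ => ∫ t in Set.Ioc (0:ℝ) x, w t * (Nf w t ^ n / (Nat.factorial n)))
      (∫ t in Set.Ioc (0:ℝ) x, w t * Complex.exp (Nf w t)) := by
    apply hasSum_integral_of_dominated_convergence
      (bound := fun (n : ℕ) t => ‖w t‖ * (C ^ n / (Nat.factorial n)))
    · intro n
      exact ((intWN w hw n).div_const _).aestronglyMeasurable.restrict.congr
        (Filter.Eventually.of_forall fun t => by ring)
    · intro n
      refine Filter.Eventually.of_forall fun t => ?_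
      rw [norm_mul, norm_div]
      have h1 : ‖(((Nat.factorial n) : ℕ) : ℂ)‖ = ((Nat.factorial n) : ℝ) := by
        simp
      rw [norm_pow, h1]
      gcongr
      exact Nf_bdd w hw t
    · exact Filter.Eventually.of_forall fun t =>
        (Real.summable_pow_div_factorial C).mul_left _
    · have : (fun t : ℝ => ∑' n : ℕ, ‖w t‖ * (C ^ n / (Nat.factorial n)))
          = fun t => ‖w t‖ * ∑' n : ℕ, (C ^ n / (Nat.factorial n)) := by
        funext t; exact tsum_mul_left
      rw [this]
      exact (hw.norm.restrict.mul_const _)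
    · exact Filter.Eventually.of_forall fun t => (hexp (Nf w t)).mul_left (w t)
  have hval : ∀ n : ℕ, (∫ t in Set.Ioc (0:ℝ) x, w t * (Nf w t ^ n / (Nat.factorial n)))
      = Nf w x ^ (n+1) / (Nat.factorial (n+1) : ℕ) := by
    intro n
    have h1 : (∫ t in Set.Ioc (0:ℝ) x, w t * (Nf w t ^ n / (Nat.factorial n)))
        = (∫ t in Set.Ioc (0:ℝ) x, w t * Nf w t ^ n) / ((Nat.factorial n) : ℂ) := by
      rw [← integral_div]
      exact setIntegral_congr_fun measurableSet_Ioc fun t _ => by ring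
    rw [h1, iter w hw n x hx, div_div, Nat.factorial_succ]
    push_cast
    ring_nf
  have hother : HasSum (fun n : ℕ => Nf w x ^ (n+1) / ((Nat.factorial (n+1) : ℕ) : ℂ))
      (Complex.exp (Nf w x) - 1) := by
    have h := hexp (Nf w x)
    have h2 := (hasSum_nat_add_iff' (f := fun n => Nf w x ^ n / ((Nat.factorial n) : ℂ)) 1).mpr h
    simpa using h2
  have := hmain
  simp_rw [hval] at this
  exact this.unique hother


/-- `f : [0,2π] → ℂ` is absolutely continuous with derivative `f'`:
`f' ∈ L¹(0,2π)` and `f x = f 0 + ∫₀ˣ f'` for all `x ∈ [0,2π]`. -/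
def IsACWithDeriv (f f' : ℝ → ℂ) : Prop :=
  MeasureTheory.IntegrableOn f' (Set.Ioc 0 (2 * Real.pi)) ∧
    ∀ x ∈ Set.Icc (0:ℝ) (2 * Real.pi), f x = f 0 + ∫ t in (0:ℝ)..x, f' t

/-- Theorem 4.9 (explicit construction of the extension with prescribed real eigenvalue):
with `g_λ(x) = −2i exp(−i∫ₓ^{2π} conj(V) + iλ(2π−x))`, `ρ_λ = (i/2)g_λ(0)` and
`k_λ = (Im V)·g_λ`, one has (a) `g_λ(2π) = −2i` and `g_λ(0) = ρ_λ g_λ(2π)`;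
(b) `g_λ` solves `i g_λ' + V g_λ + g_λ(2π) k_λ = λ g_λ` a.e.;
(c) `1 − |ρ_λ|² = (1/2)∫₀^{2π} Im V(t) |g_λ(t)|² dt`. -/
theorem construction_of_extension_with_real_eigenvalue
    (V : ℝ → ℂ)
    (hV : MeasureTheory.MemLp V ⊤ (MeasureTheory.volume.restrict (Set.Ioo 0 (2 * Real.pi))))
    (hVI : ∀ᵐ x ∂(MeasureTheory.volume.restrict (Set.Ioo 0 (2 * Real.pi))), 0 ≤ (V x).im)
    (lam : ℝ) (g : ℝ → ℂ)
    (hg : ∀ x : ℝ, g x = -2 * Complex.I *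
      Complex.exp (-(Complex.I * ∫ t in x..(2 * Real.pi), (starRingEnd ℂ) (V t))
        + Complex.I * lam * ((2 * Real.pi : ℝ) - x)))
    (ρ : ℂ) (hρ : ρ = Complex.I / 2 * g 0)
    (kf : ℝ → ℂ) (hkf : ∀ x : ℝ, kf x = ((V x).im : ℂ) * g x) :
    (g (2 * Real.pi) = -2 * Complex.I ∧ g 0 = ρ * g (2 * Real.pi)) ∧
    (∃ g' : ℝ → ℂ, IsACWithDeriv g g' ∧
      ∀ᵐ x ∂(MeasureTheory.volume.restrict (Set.Ioo 0 (2 * Real.pi))),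
        Complex.I * g' x + V x * g x + g (2 * Real.pi) * kf x = (lam : ℂ) * g x) ∧
    1 - ‖ρ‖ ^ 2
      = (1 / 2) * ∫ t in (0:ℝ)..(2 * Real.pi), (V t).im * ‖g t‖ ^ 2 := by
  have hπ : (0:ℝ) < 2 * Real.pi := by positivity
  -- integrability of V
  haveI : Fact (volume (Set.Ioo (0:ℝ) (2*Real.pi)) < ⊤) := ⟨measure_Ioo_lt_top⟩
  have hVioo : IntegrableOn V (Set.Ioo 0 (2*Real.pi)) := hV.integrable le_top
  have hVioc : IntegrableOn V (Set.Ioc 0 (2*Real.pi)) := by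
    unfold IntegrableOn
    rw [← Measure.restrict_congr_set Ioo_ae_eq_Ioc]
    exact hVioo
  have hconj : IntegrableOn (fun t => (starRingEnd ℂ) (V t)) (Set.Ioc 0 (2*Real.pi)) := by
    refine Integrable.mono hVioc
      (Complex.continuous_conj.comp_aestronglyMeasurable hVioc.aestronglyMeasurable)
      (Filter.Eventually.of_forall fun t => ?_)
    simp
  -- the coefficient u and its indicator version w
  set u : ℝ → ℂ := fun t => Complex.I * (starRingEnd ℂ) (V t) - Complex.I * lam with hu_def
  have hu : IntegrableOn u (Set.Ioc 0 (2*Real.pi)) := by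
    refine ((hconj.const_mul Complex.I).sub ?_)
    exact integrableOn_const measure_Ioc_lt_top.ne
  set w : ℝ → ℂ := (Set.Ioc (0:ℝ) (2*Real.pi)).indicator u with hw_def
  have hwint : Integrable w := (integrable_indicator_iff measurableSet_Ioc).2 hu
  -- interval integrability of conj V
  have hIIconj : ∀ x ∈ Set.Icc (0:ℝ) (2*Real.pi),
      IntervalIntegrable (fun t => (starRingEnd ℂ) (V t)) volume x (2*Real.pi) ∧
      IntervalIntegrable (fun t => (starRingEnd ℂ) (V t)) volume 0 x := by
    intro x hx
    constructor
    · rw [intervalIntegrable_iff_integrableOn_Ioc_of_le hx.2]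
      exact hconj.mono_set (Set.Ioc_subset_Ioc hx.1 le_rfl)
    · rw [intervalIntegrable_iff_integrableOn_Ioc_of_le hx.1]
      exact hconj.mono_set (Set.Ioc_subset_Ioc le_rfl hx.2)
  -- N computation
  have hNeq : ∀ x ∈ Set.Icc (0:ℝ) (2*Real.pi),
      Nf w x = Complex.I * (∫ t in (0:ℝ)..x, (starRingEnd ℂ) (V t)) - Complex.I * lam * x := by
    intro x hx
    have h1 : Nf w x = ∫ t in Set.Ioc (0:ℝ) x, u t := by
      rw [Nf, hw_def, setIntegral_indicator measurableSet_Ioc,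
        Set.inter_eq_left.2 (Set.Ioc_subset_Ioc le_rfl hx.2)]
    rw [h1]
    have h2 : IntegrableOn (fun t => Complex.I * (starRingEnd ℂ) (V t)) (Set.Ioc 0 x) :=
      (hconj.mono_set (Set.Ioc_subset_Ioc le_rfl hx.2)).const_mul Complex.I
    have h3 : IntegrableOn (fun _ : ℝ => Complex.I * (lam:ℂ)) (Set.Ioc 0 x) :=
      integrableOn_const measure_Ioc_lt_top.ne
    rw [hu_def]
    rw [integral_sub h2 h3, integral_const_mul, setIntegral_const]
    rw [← intervalIntegral.integral_of_le hx.1]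
    rw [Real.volume_real_Ioc_of_le hx.1, sub_zero, Complex.real_smul]
    push_cast
    ring
  -- g in terms of Nf w
  have hgN : ∀ x ∈ Set.Icc (0:ℝ) (2*Real.pi), g x = g 0 * Complex.exp (Nf w x) := by
    intro x hx
    have hsplitV : (∫ t in (0:ℝ)..x, (starRingEnd ℂ) (V t))
        + ∫ t in x..(2*Real.pi), (starRingEnd ℂ) (V t)
        = ∫ t in (0:ℝ)..(2*Real.pi), (starRingEnd ℂ) (V t) :=
      intervalIntegral.integral_add_adjacent_intervals (hIIconj x hx).2 (hIIconj x hx).1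
    have key : ∀ a b c : ℂ, a = b + c →
        -2*Complex.I*Complex.exp a = (-2*Complex.I*Complex.exp b) * Complex.exp c := by
      intro a b c h; rw [h, Complex.exp_add]; ring
    rw [hg x, hg 0]
    exact key _ _ _ (by rw [hNeq x hx, ← hsplitV]; push_cast; ring)
  -- (a)
  have ha1 : g (2 * Real.pi) = -2 * Complex.I := by
    rw [hg]
    simp
  have ha2 : g 0 = ρ * g (2 * Real.pi) := by
    rw [hρ, ha1]
    linear_combination (g 0) * Complex.I_sq
  refine ⟨⟨ha1, ha2⟩, ?_, ?_⟩
  · -- (b)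
    refine ⟨fun t => u t * g t, ⟨?_, ?_⟩, ?_⟩
    · -- integrability
      have hcont : Continuous fun t => g 0 * Complex.exp (Nf w t) :=
        continuous_const.mul (Complex.continuous_exp.comp (Nf_cont w hwint))
      obtain ⟨M, hM⟩ := isCompact_Icc.exists_bound_of_continuousOn
        (s := Set.Icc (0:ℝ) (2*Real.pi)) hcont.continuousOn
      have hint : IntegrableOn (fun t => (g 0 * Complex.exp (Nf w t)) * u t)
          (Set.Ioc 0 (2*Real.pi)) := by
        refine hu.bdd_mul (c := M) hcont.aestronglyMeasurable.restrict ?_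
        refine (ae_restrict_iff' measurableSet_Ioc).2 (Filter.Eventually.of_forall fun t ht => ?_)
        exact hM t (Set.Ioc_subset_Icc_self ht)
      refine hint.congr_fun (fun t ht => ?_) measurableSet_Ioc
      beta_reduce
      rw [← hgN t (Set.Ioc_subset_Icc_self ht)]
      ring
    · -- AC identity
      intro x hx
      have hxle : (0:ℝ) ≤ x := hx.1
      rw [intervalIntegral.integral_of_le hxle]
      have hcong : ∫ t in Set.Ioc (0:ℝ) x, u t * g t
          = ∫ t in Set.Ioc (0:ℝ) x, g 0 * (w t * Complex.exp (Nf w t)) := by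
        refine setIntegral_congr_fun measurableSet_Ioc fun t ht => ?_
        have ht2 : t ∈ Set.Ioc (0:ℝ) (2*Real.pi) := Set.Ioc_subset_Ioc le_rfl hx.2 ht
        rw [hgN t (Set.Ioc_subset_Icc_self ht2), hw_def, Set.indicator_of_mem ht2]
        ring
      rw [hcong, integral_const_mul, key_exp w hwint x hxle, hgN x hx]
      ring
    · -- eigenvalue equation
      refine Filter.Eventually.of_forall fun x => ?_
      rw [ha1, hkf]
      have hc := Complex.sub_conj (V x)
      push_cast at hc
      linear_combination ((starRingEnd ℂ) (V x) - (lam:ℂ)) * g x * Complex.I_sq + g x * hc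
  · -- (c)
    set vr : ℝ → ℝ := (Set.Ioc (0:ℝ) (2*Real.pi)).indicator (fun t => 2 * (V t).im) with hvr_def
    have hvrint : Integrable vr :=
      (integrable_indicator_iff measurableSet_Ioc).2 ((hVioc.im).const_mul 2)
    set wc : ℝ → ℂ := fun t => ((vr t : ℝ) : ℂ) with hwc_def
    have hwcint : Integrable wc := hvrint.ofReal
    set m : ℝ → ℝ := fun t => ∫ s in Set.Ioc (0:ℝ) t, vr s with hm_def
    have hNfwc : ∀ t, Nf w t = Nf w t := fun t => rfl
    have hNwc : ∀ t, Nf wc t = ((m t : ℝ) : ℂ) := fun t => integral_ofReal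
    -- real key identity
    have hreal : ∫ t in Set.Ioc (0:ℝ) (2*Real.pi), vr t * Real.exp (m t)
        = Real.exp (m (2*Real.pi)) - 1 := by
      have h := key_exp wc hwcint (2*Real.pi) hπ.le
      have hl : ∫ t in Set.Ioc (0:ℝ) (2*Real.pi), wc t * Complex.exp (Nf wc t)
          = ((∫ t in Set.Ioc (0:ℝ) (2*Real.pi), vr t * Real.exp (m t) : ℝ) : ℂ) := by
        refine Eq.trans (setIntegral_congr_fun measurableSet_Ioc fun t _ => ?_) integral_ofReal
        rw [hNwc t, ← Complex.ofReal_exp, hwc_def, ← Complex.ofReal_mul]; norm_num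
      rw [hl, hNwc, ← Complex.ofReal_exp] at h
      exact_mod_cast h
    -- m as integral of Im V
    have hmx : ∀ x ∈ Set.Icc (0:ℝ) (2*Real.pi),
        m x = 2 * ∫ t in Set.Ioc (0:ℝ) x, (V t).im := by
      intro x hx
      simp only [hm_def]
      rw [show (∫ s in Set.Ioc (0:ℝ) x, vr s) = ∫ s in Set.Ioc (0:ℝ) x, 2 * (V s).im from
        setIntegral_congr_fun measurableSet_Ioc fun s hs => by
          rw [hvr_def, Set.indicator_of_mem (Set.Ioc_subset_Ioc le_rfl hx.2 hs)]]
      rw [integral_const_mul]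
    have hm0 : m 0 = 0 := by simp only [hm_def]; simp [Set.Ioc_self]
    -- imaginary part of ∫₀ˣ conj V
    have hSim : ∀ x ∈ Set.Icc (0:ℝ) (2*Real.pi),
        (∫ t in (0:ℝ)..x, (starRingEnd ℂ) (V t)).im = -(m x)/2 := by
      intro x hx
      have hI := integral_im (𝕜 := ℂ) (μ := volume.restrict (Set.Ioc (0:ℝ) x))
        (f := fun t => (starRingEnd ℂ) (V t)) (hconj.mono_set (Set.Ioc_subset_Ioc le_rfl hx.2))
      simp only [RCLike.im_to_complex] at hI
      rw [intervalIntegral.integral_of_le hx.1, ← hI]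
      simp only [Complex.conj_im]
      rw [integral_neg, hmx x hx]
      ring
    -- imaginary part of ∫ₓ^{2π} conj V
    have hZim : ∀ x ∈ Set.Icc (0:ℝ) (2*Real.pi),
        (∫ t in x..(2*Real.pi), (starRingEnd ℂ) (V t)).im = (m x - m (2*Real.pi))/2 := by
      intro x hx
      have hs := intervalIntegral.integral_add_adjacent_intervals (hIIconj x hx).2 (hIIconj x hx).1
      have him := congrArg Complex.im hs
      rw [Complex.add_im] at him
      have e1 := hSim x hx
      have e2 := hSim (2*Real.pi) ⟨hπ.le, le_rfl⟩
      linarith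
    -- |g x|
    have habs : ∀ x ∈ Set.Icc (0:ℝ) (2*Real.pi),
        ‖g x‖ = 2 * Real.exp ((m x - m (2*Real.pi))/2) := by
      intro x hx
      rw [hg x, norm_mul, Complex.norm_exp]
      have h2 : ‖-2 * Complex.I‖ = 2 := by simp
      have h3 : (-(Complex.I * ∫ t in x..(2*Real.pi), (starRingEnd ℂ) (V t))
          + Complex.I * (lam:ℂ) * (((2*Real.pi : ℝ):ℂ) - (x:ℂ))).re
          = (∫ t in x..(2*Real.pi), (starRingEnd ℂ) (V t)).im := by
        simp [Complex.add_re, Complex.neg_re, Complex.mul_re, Complex.mul_im,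
          Complex.I_re, Complex.I_im, Complex.sub_re, Complex.sub_im,
          Complex.ofReal_re, Complex.ofReal_im]
      rw [h2, h3, hZim x hx]
    have hsq : ∀ r : ℝ, (2*Real.exp r)^2 = 4 * Real.exp (r + r) := fun r => by
      rw [mul_pow, pow_two (Real.exp r), ← Real.exp_add]; norm_num
    have habs2 : ∀ x ∈ Set.Icc (0:ℝ) (2*Real.pi),
        ‖g x‖ ^ 2 = 4 * Real.exp (m x - m (2*Real.pi)) := by
      intro x hx
      rw [habs x hx, hsq,
        show (m x - m (2*Real.pi))/2 + (m x - m (2*Real.pi))/2 = m x - m (2*Real.pi) by ring]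
    -- |ρ|²
    have hρabs : ‖ρ‖ ^ 2 = Real.exp (-(m (2*Real.pi))) := by
      rw [hρ, norm_mul, habs 0 ⟨le_rfl, hπ.le⟩, hm0, norm_div, Complex.norm_I, Complex.norm_two]
      rw [show ((0:ℝ) - m (2*Real.pi))/2 = -(m (2*Real.pi))/2 by ring]
      rw [show (1/2 : ℝ) * (2 * Real.exp (-(m (2*Real.pi))/2))
          = Real.exp (-(m (2*Real.pi))/2) by ring]
      rw [pow_two, ← Real.exp_add]
      rw [show -(m (2*Real.pi))/2 + -(m (2*Real.pi))/2 = -(m (2*Real.pi)) by ring]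
    -- half of hreal
    have h2 : (2:ℝ) * ∫ t in Set.Ioc (0:ℝ) (2*Real.pi), (V t).im * Real.exp (m t)
        = Real.exp (m (2*Real.pi)) - 1 := by
      rw [← hreal, ← integral_const_mul]
      refine setIntegral_congr_fun measurableSet_Ioc fun t ht => ?_
      rw [hvr_def, Set.indicator_of_mem ht]
      ring
    -- rewrite the goal integral
    have hint : (∫ t in (0:ℝ)..(2*Real.pi), (V t).im * ‖g t‖ ^ 2)
        = (∫ t in Set.Ioc (0:ℝ) (2*Real.pi), (V t).im * Real.exp (m t))
            * (4 * Real.exp (-(m (2*Real.pi)))) := by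
      rw [intervalIntegral.integral_of_le hπ.le, ← integral_mul_const]
      refine setIntegral_congr_fun measurableSet_Ioc fun t ht => ?_
      rw [habs2 t (Set.Ioc_subset_Icc_self ht)]
      rw [show m t - m (2*Real.pi) = m t + -(m (2*Real.pi)) by ring, Real.exp_add]
      ring
    rw [hρabs, hint]
    have hE := Real.exp_ne_zero (m (2*Real.pi))
    have hEneg : Real.exp (-(m (2*Real.pi))) = (Real.exp (m (2*Real.pi)))⁻¹ := Real.exp_neg _
    rw [hEneg]
    field_simp
    linear_combination (-2) * h2
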